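/- For the channel Λ'(ρ) = Σⱼ Vⱼ ρ Vⱼ† with Vⱼ ∈ (1/2){I⊗I, X⊗X, Z⊗Z, −Y⊗Y}, there do not exist density matrices τ_A, τ_B (as functions of the inputs) such that Λ'(σ_A ⊗ σ_B) = τ_A ⊗ τ_B for all density matrices σ_A, σ_B; i.e., the second-qubit subsystem is private but not operator private for Λ'. -/

import Mathlib

open Matrix Kronecker ComplexOrder

noncomputable section

def PX : Matrix (Fin 2) (Fin 2) ℂ := !![0, 1; 1, 0]
def PY : Matrix (Fin 2) (Fin 2) ℂ := !![0, -Complex.I; Complex.I, 0]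
def PZ : Matrix (Fin 2) (Fin 2) ℂ := !![1, 0; 0, -1]

/-- The channel Λ' with Kraus operators (1/2){II, XX, ZZ, −YY}. -/
def Lam' (ρ : Matrix (Fin 2 × Fin 2) (Fin 2 × Fin 2) ℂ) :
    Matrix (Fin 2 × Fin 2) (Fin 2 × Fin 2) ℂ :=
  ((1/2 : ℂ) • ((1 : Matrix (Fin 2) (Fin 2) ℂ) ⊗ₖ 1)) * ρ * ((1/2 : ℂ) • ((1 : Matrix (Fin 2) (Fin 2) ℂ) ⊗ₖ 1))ᴴ
  + ((1/2 : ℂ) • (PX ⊗ₖ PX)) * ρ * ((1/2 : ℂ) • (PX ⊗ₖ PX))ᴴ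
  + ((1/2 : ℂ) • (PZ ⊗ₖ PZ)) * ρ * ((1/2 : ℂ) • (PZ ⊗ₖ PZ))ᴴ
  + ((-(1/2) : ℂ) • (PY ⊗ₖ PY)) * ρ * ((-(1/2) : ℂ) • (PY ⊗ₖ PY))ᴴ

def E00 : Matrix (Fin 2) (Fin 2) ℂ := !![1, 0; 0, 0]

lemma E00_psd : E00.PosSemidef := by
  rw [Matrix.posSemidef_iff_dotProduct_mulVec]
  constructor
  · ext i j; fin_cases i <;> fin_cases j <;> simp [E00, Matrix.conjTranspose_apply]
  · intro x
    have : star x ⬝ᵥ E00.mulVec x = star (x 0) * x 0 := by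
      simp [E00, dotProduct, Matrix.mulVec, Fin.sum_univ_two]
    rw [this]
    exact star_mul_self_nonneg (x 0)

lemma E00_tr : E00.trace = 1 := by
  simp [E00, Matrix.trace, Fin.sum_univ_two]

set_option maxHeartbeats 1000000 in
/-- The second-qubit subsystem is private but not *operator* private for Λ':
there are no density-matrix-valued assignments τ_A, τ_B with
Λ'(σ_A ⊗ σ_B) = τ_A ⊗ τ_B on all product density inputs. -/
theorem Lam'_not_operator_private :
    ¬ ∃ (τA τB : Matrix (Fin 2) (Fin 2) ℂ → Matrix (Fin 2) (Fin 2) ℂ →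
                  Matrix (Fin 2) (Fin 2) ℂ),
      ∀ σA σB : Matrix (Fin 2) (Fin 2) ℂ,
        σA.PosSemidef → σA.trace = 1 → σB.PosSemidef → σB.trace = 1 →
        (τA σA σB).PosSemidef ∧ (τA σA σB).trace = 1 ∧
        (τB σA σB).PosSemidef ∧ (τB σA σB).trace = 1 ∧
        Lam' (σA ⊗ₖ σB) = (τA σA σB) ⊗ₖ (τB σA σB) := by
  rintro ⟨τA, τB, h⟩
  obtain ⟨-, -, -, -, heq⟩ := h E00 E00 E00_psd E00_tr E00_psd E00_tr
  set a := τA E00 E00 with ha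
  set b := τB E00 E00 with hb
  have key : ∀ i j : Fin 2 × Fin 2, Lam' (E00 ⊗ₖ E00) i j = a (i.1) (j.1) * b (i.2) (j.2) := by
    intro i j
    have := congrFun (congrFun heq i) j
    simpa [Matrix.kroneckerMap_apply] using this
  have h1 := key ((0 : Fin 2), (0 : Fin 2)) ((0 : Fin 2), (0 : Fin 2))
  have h2 := key ((1 : Fin 2), (1 : Fin 2)) ((1 : Fin 2), (1 : Fin 2))
  have h3 := key ((0 : Fin 2), (1 : Fin 2)) ((0 : Fin 2), (1 : Fin 2))
  simp only [Lam', PX, PY, PZ, E00, Matrix.add_apply, Matrix.mul_apply,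
    Matrix.smul_apply, Matrix.conjTranspose_apply, Matrix.kroneckerMap_apply,
    Matrix.one_apply, Fintype.sum_prod_type, Fin.sum_univ_two] at h1 h2 h3
  norm_num [Matrix.cons_val_zero, Matrix.cons_val_one, Matrix.head_cons] at h1 h2 h3
  rcases h3 with h3 | h3
  · rw [h3, zero_mul] at h1; norm_num at h1
  · rw [h3, mul_zero] at h2; norm_num at h2
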